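/- For every real ε > 0 there exists a natural number N such that for all integers n ≥ N, every complex root α of the polynomial f_{1,n}(X) satisfies 1 ≤ |α| < 1 + ε. In particular, the absolute values of the roots of f_{1,n} tend to 1 as n → ∞. -/

import Mathlib

open Polynomial

/-- `f1 n = X^(n-1) + 2 X^(n-2) + ⋯ + (n-1) X + n = Σ_{k=1}^n k · X^(n-k)` over `ℤ`. -/
noncomputable def f1 (n : ℕ) : Polynomial ℤ :=
  ∑ k ∈ Finset.Icc 1 n, C (k : ℤ) * X ^ (n - k)

lemma f1_succ (n : ℕ) : f1 (n+1) = X * f1 n + C ((n:ℤ)+1) := by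
  rw [f1, f1, Finset.sum_Icc_succ_top (by omega : 1 ≤ n+1), Finset.mul_sum]
  simp only [Nat.sub_self, pow_zero, mul_one]
  congr 1
  · apply Finset.sum_congr rfl
    intro k hk
    have hk' : k ≤ n := (Finset.mem_Icc.mp hk).2
    have : n + 1 - k = (n - k) + 1 := by omega
    rw [this, pow_succ]
    ring

lemma telescope (n : ℕ) (α : ℂ) :
    (∑ j ∈ Finset.Icc 1 n, (α ^ (j+1) - α ^ j)) = α ^ (n+1) - α ^ 1 := by
  induction n with
  | zero => simp
  | succ n ih => rw [Finset.sum_Icc_succ_top (by omega : 1 ≤ n+1), ih]; ring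

lemma eval_f1 (n : ℕ) (α : ℂ) :
    (α - 1) * aeval α (f1 n) = (∑ j ∈ Finset.Icc 1 n, α ^ j) - n := by
  induction n with
  | zero => simp [f1]
  | succ n ih =>
    rw [f1_succ, Finset.sum_Icc_succ_top (by omega : 1 ≤ n+1)]
    simp only [map_add, map_mul, aeval_X, aeval_C, map_natCast, map_one]
    have shift : α * ∑ j ∈ Finset.Icc 1 n, α ^ j
        = (∑ j ∈ Finset.Icc 1 n, α ^ j) + α^(n+1) - α := by
      have h := telescope n α
      rw [Finset.sum_sub_distrib] at h
      have h2 : α * ∑ j ∈ Finset.Icc 1 n, α ^ j = ∑ j ∈ Finset.Icc 1 n, α ^ (j+1) := by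
        rw [Finset.mul_sum]
        exact Finset.sum_congr rfl fun j _ => by ring
      rw [h2]
      linear_combination h
    push_cast
    linear_combination α * ih + shift

lemma eval_f1' (n : ℕ) (α : ℂ) :
    (α - 1)^2 * aeval α (f1 n) = α ^ (n+1) - (n+1) * α + n := by
  have h := eval_f1 n α
  have step : (α - 1)^2 * aeval α (f1 n) = (α - 1) * ((α - 1) * aeval α (f1 n)) := by ring
  rw [step, h, mul_sub, Finset.mul_sum]
  have h2 : ∀ j ∈ Finset.Icc 1 n, (α - 1) * α ^ j = α ^ (j+1) - α ^ j := by
    intro j _; ring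
  rw [Finset.sum_congr rfl h2, telescope]
  ring

/-- For every `ε > 0` there is `N` such that for all `n ≥ N` every complex root `α`
of `f1 n` satisfies `1 ≤ |α| < 1 + ε`; i.e. the absolute values of the roots tend to `1`. -/
theorem stmt1 (ε : ℝ) (hε : 0 < ε) :
    ∃ N : ℕ, ∀ n : ℕ, N ≤ n → ∀ α : ℂ, Polynomial.aeval α (f1 n) = 0 →
      1 ≤ ‖α‖ ∧ ‖α‖ < 1 + ε := by
  have hr : (1:ℝ) < 1 + ε := by linarith
  have hlo := isLittleO_coe_const_pow_of_one_lt (R := ℝ) hr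
  have hev := hlo.def (by norm_num : (0:ℝ) < 1/4)
  rw [Filter.eventually_atTop] at hev
  obtain ⟨N0, hN0⟩ := hev
  refine ⟨max N0 1, fun n hn α hroot => ?_⟩
  have hn1 : 1 ≤ n := le_trans (le_max_right N0 1) hn
  have hnN0 : N0 ≤ n := le_trans (le_max_left N0 1) hn
  have h14 : (n : ℝ) ≤ 1/4 * (1+ε)^n := by
    have := hN0 n hnN0
    simp only [Real.norm_eq_abs, Nat.abs_cast] at this
    calc (n:ℝ) ≤ 1/4 * |(1+ε)^n| := this
    _ = 1/4 * (1+ε)^n := by rw [abs_of_pos (pow_pos (by linarith) n)]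
  -- α ≠ 1
  have hα1 : α ≠ 1 := by
    intro h
    subst h
    rw [f1] at hroot
    simp only [map_sum, map_mul, aeval_C, aeval_X_pow, one_pow, mul_one] at hroot
    have : ((∑ k ∈ Finset.Icc 1 n, k : ℕ) : ℂ) = 0 := by
      push_cast
      simpa using hroot
    rw [Nat.cast_eq_zero] at this
    have hpos : 0 < ∑ k ∈ Finset.Icc 1 n, k :=
      Finset.sum_pos (fun k hk => (Finset.mem_Icc.mp hk).1)
        ⟨1, Finset.mem_Icc.mpr ⟨le_refl 1, hn1⟩⟩
    omega
  -- lower bound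
  have hlow : 1 ≤ ‖α‖ := by
    by_contra hlt
    push_neg at hlt
    have hsum : (∑ j ∈ Finset.Icc 1 n, α ^ j) = (n:ℂ) := by
      have h := eval_f1 n α
      rw [hroot, mul_zero] at h
      linear_combination -h
    have h1 : ‖∑ j ∈ Finset.Icc 1 n, α ^ j‖ = (n:ℝ) := by
      rw [hsum, Complex.norm_natCast]
    have h2 : ‖∑ j ∈ Finset.Icc 1 n, α ^ j‖
        ≤ ∑ j ∈ Finset.Icc 1 n, (‖α‖) ^ j := by
      refine le_trans (norm_sum_le _ _) (le_of_eq ?_)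
      exact Finset.sum_congr rfl fun j _ => norm_pow _ _
    have h3 : ∑ j ∈ Finset.Icc 1 n, (‖α‖) ^ j
        < ∑ j ∈ Finset.Icc 1 n, (1:ℝ) := by
      refine Finset.sum_lt_sum_of_nonempty ⟨1, Finset.mem_Icc.mpr ⟨le_refl 1, hn1⟩⟩ ?_
      intro j hj
      exact pow_lt_one₀ (norm_nonneg α) hlt (by have := (Finset.mem_Icc.mp hj).1; omega)
    rw [Finset.sum_const, Nat.card_Icc, nsmul_eq_mul, mul_one] at h3
    rw [h1] at h2
    have : (n:ℝ) < (n + 1 - 1 : ℕ) := lt_of_le_of_lt h2 h3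
    simp at this
  refine ⟨hlow, ?_⟩
  -- upper bound
  by_contra hge
  push_neg at hge
  have hid : α ^ (n+1) = ((n:ℂ)+1) * α - n := by
    have h := eval_f1' n α
    rw [hroot, mul_zero] at h
    push_cast at h ⊢
    linear_combination -h
  have habs : (‖α‖) ^ (n+1) ≤ (n+1) * ‖α‖ + n := by
    rw [← norm_pow, hid]
    refine le_trans (norm_sub_le _ _) ?_
    have e1 : ‖((n:ℂ)+1) * α‖ = (n+1) * ‖α‖ := by
      rw [norm_mul]
      congr 1
      rw [show ((n:ℂ)+1) = ((n+1 : ℕ) : ℂ) by push_cast; ring, Complex.norm_natCast]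
      push_cast; ring
    rw [e1, Complex.norm_natCast]
  have hA : 0 < ‖α‖ := lt_of_lt_of_le one_pos hlow
  have habs2 : (‖α‖) ^ n ≤ 2 * n + 1 := by
    have h1 : (‖α‖) ^ n * ‖α‖ ≤ (2 * n + 1) * ‖α‖ := by
      rw [← pow_succ]
      calc (‖α‖) ^ (n+1) ≤ (n+1) * ‖α‖ + n := habs
      _ ≤ (n+1) * ‖α‖ + n * ‖α‖ := by nlinarith
      _ = (2 * n + 1) * ‖α‖ := by ring
    exact le_of_mul_le_mul_right h1 hA
  have hpow : (1+ε)^n ≤ (‖α‖) ^ n := pow_le_pow_left₀ (by linarith) hge n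
  have hn1' : (1:ℝ) ≤ n := by exact_mod_cast hn1
  nlinarith [pow_pos (show (0:ℝ) < 1+ε by linarith) n]
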